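/- Let Γ be a simple game and let S₁, S₂ be losing coalitions. If there exist minimal winning coalitions S₃, S₄ such that for every player p, the number of indices i ∈ {3,4} with p ∈ Sᵢ is at most the number of indices i ∈ {1,2} with p ∈ Sᵢ, then there exist winning coalitions S₃′ ⊇ S₃ and S₄′ ⊇ S₄ such that (S₁,S₂,S₃′,S₄′) is a 2-trade application, i.e., for every player p, |{i ∈ {1,2} : p ∈ Sᵢ}| = |{i ∈ {3,4} : p ∈ Sᵢ′}|. -/

import Mathlib

/-- Number of occurrences of player `p` in the pair of coalitions `(A, B)`. -/
def cnt {N : Type*} [DecidableEq N] (A B : Finset N) (p : N) : ℕ :=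
  (if p ∈ A then 1 else 0) + (if p ∈ B then 1 else 0)

/-- If `S₁, S₂` are losing and `S₃, S₄` are minimal winning coalitions such that
every player occurs in `(S₃,S₄)` at most as often as in `(S₁,S₂)`, then `S₃,S₄`
can be enlarged to winning coalitions `S₃', S₄'` making `(S₁,S₂,S₃',S₄')` a
2-trade application. -/
theorem minimal_winning_fillup_two_trade
    {N : Type*} [Fintype N] [DecidableEq N] (W : Set (Finset N))
    (hfull : Finset.univ ∈ W) (hempty : (∅ : Finset N) ∉ W)
    (hmono : ∀ S T : Finset N, S ∈ W → S ⊆ T → T ∈ W)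
    (S1 S2 S3 S4 : Finset N)
    (h1 : S1 ∉ W) (h2 : S2 ∉ W)
    (h3 : S3 ∈ W ∧ ∀ T : Finset N, T ⊂ S3 → T ∉ W)
    (h4 : S4 ∈ W ∧ ∀ T : Finset N, T ⊂ S4 → T ∉ W)
    (hle : ∀ p : N, cnt S3 S4 p ≤ cnt S1 S2 p) :
    ∃ S3' S4' : Finset N, S3 ⊆ S3' ∧ S4 ⊆ S4' ∧ S3' ∈ W ∧ S4' ∈ W ∧
      ∀ p : N, cnt S1 S2 p = cnt S3' S4' p := by
  classical
  set A : Finset N := Finset.univ.filter (fun p => cnt S1 S2 p = 2) with hA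
  set B : Finset N :=
    Finset.univ.filter (fun p => 1 ≤ cnt S1 S2 p ∧ p ∉ S3 ∧ p ∉ S4) with hB
  refine ⟨S3 ∪ A ∪ B, S4 ∪ A, ?_, ?_, ?_, ?_, ?_⟩
  · intro x hx; simp [hx]
  · intro x hx; simp [hx]
  · exact hmono S3 _ h3.1 (by intro x hx; simp [hx])
  · exact hmono S4 _ h4.1 (by intro x hx; simp [hx])
  · intro p
    have h := hle p
    have hAm : p ∈ A ↔ cnt S1 S2 p = 2 := by simp [A]
    have hBm : p ∈ B ↔ 1 ≤ cnt S1 S2 p ∧ p ∉ S3 ∧ p ∉ S4 := by simp [B]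
    simp only [cnt, Finset.mem_union, hAm, hBm]
    simp only [cnt, hA, hB, Finset.mem_union, Finset.mem_filter, Finset.mem_univ,
      true_and] at *
    by_cases h1p : p ∈ S1 <;> by_cases h2p : p ∈ S2 <;> by_cases h3p : p ∈ S3 <;>
      by_cases h4p : p ∈ S4 <;> simp_all <;> omega
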